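/- Let 0<q<1 and ν real, and let h(z) = (-q²z²;q²)_∞/(-q^{-2ν+1}z²;q²)_∞. Then h satisfies z²(-q^{-2ν+1} h(z) + q² h(qz)) = h(z) - h(qz) for all complex z where defined, and for real z it is everywhere defined and positive. -/

import Mathlib

/-- The infinite q-Pochhammer symbol `(x;q)_∞ = ∏_{n≥0} (1 - x q^n)`. -/
noncomputable def qp (q x : ℂ) : ℂ := ∏' n : ℕ, (1 - x * q ^ n)

/-- The infinite q-Pochhammer symbol over the reals. -/
noncomputable def qpR (q x : ℝ) : ℝ := ∏' n : ℕ, (1 - x * q ^ n)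

/-- `h(z) = (-q²z²;q²)_∞ / (-q^{-2ν+1}z²;q²)_∞` (complex version). -/
noncomputable def hh (q ν : ℝ) (z : ℂ) : ℂ :=
  qp ((q : ℂ) ^ 2) (-((q : ℂ) ^ 2 * z ^ 2)) /
    qp ((q : ℂ) ^ 2) (-(((q ^ (-2 * ν + 1) : ℝ) : ℂ) * z ^ 2))

/-- `h` restricted to real arguments. -/
noncomputable def hhR (q ν : ℝ) (x : ℝ) : ℝ :=
  qpR (q ^ 2) (-(q ^ 2 * x ^ 2)) / qpR (q ^ 2) (-(q ^ (-2 * ν + 1) * x ^ 2))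

/-- Multipliability of the q-Pochhammer factors when `‖q‖ < 1`. -/
lemma qp_multipliable (q x : ℂ) (hq : ‖q‖ < 1) :
    Multipliable (fun n : ℕ => 1 - x * q ^ n) := by
  by_cases hz : ∃ n : ℕ, 1 - x * q ^ n = 0
  · obtain ⟨n₀, hn₀⟩ := hz
    refine ⟨0, ?_⟩
    have : ∀ᶠ s : Finset ℕ in Filter.atTop, ∏ i ∈ s, (1 - x * q ^ i) = 0 := by
      filter_upwards [Filter.eventually_ge_atTop ({n₀} : Finset ℕ)] with s hs
      exact Finset.prod_eq_zero (hs (Finset.mem_singleton_self n₀)) hn₀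
    exact Filter.Tendsto.congr' (Filter.EventuallyEq.symm this) tendsto_const_nhds
  · push_neg at hz
    have hsum : Summable fun n : ℕ => Complex.log (1 - x * q ^ n) := by
      have hgeo : Summable fun n : ℕ => (3 / 2 : ℝ) * (‖x‖ * ‖q‖ ^ n) :=
        ((summable_geometric_of_lt_one (norm_nonneg q) hq).mul_left ‖x‖).mul_left _
      refine Summable.of_norm_bounded_eventually_nat hgeo ?_
      have hten : Filter.Tendsto (fun n : ℕ => ‖x‖ * ‖q‖ ^ n) Filter.atTop (nhds 0) := by
        simpa using (tendsto_pow_atTop_nhds_zero_of_lt_one (norm_nonneg q) hq).const_mul ‖x‖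
      filter_upwards [hten.eventually_le_const (by norm_num : (0 : ℝ) < 1 / 2)] with n hn
      have hxq : ‖-(x * q ^ n)‖ ≤ 1 / 2 := by
        rw [norm_neg, norm_mul, norm_pow]; exact hn
      have := Complex.norm_log_one_add_half_le_self hxq
      rw [show (1 : ℂ) + -(x * q ^ n) = 1 - x * q ^ n by ring] at this
      refine this.trans ?_
      rw [norm_neg, norm_mul, norm_pow]
    exact Complex.multipliable_of_summable_log hsum

/-- The fundamental shift identity `(x;q)_∞ = (1-x) (qx;q)_∞`. -/
lemma qp_shift (q x : ℂ) (hq : ‖q‖ < 1) : qp q x = (1 - x) * qp q (q * x) := by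
  have hm : Multipliable fun n : ℕ => 1 - x * q ^ (n + 1) :=
    (qp_multipliable q (x * q) hq).congr fun n => by ring
  have h0 : (∏' n : ℕ, (1 - x * q ^ n)) =
      (1 - x * q ^ 0) * ∏' n : ℕ, (1 - x * q ^ (n + 1)) :=
    tprod_eq_zero_mul' hm
  unfold qp
  rw [h0, pow_zero, mul_one]
  congr 1
  exact tprod_congr fun n => by ring

/-- Real q-Pochhammer at a nonpositive argument is at least 1. -/
lemma one_le_qpR (q c : ℝ) (hq : 0 < q) (hc : 0 ≤ c) : 1 ≤ qpR q (-c) := by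
  unfold qpR
  by_cases hm : Multipliable fun n : ℕ => 1 - -c * q ^ n
  · refine ge_of_tendsto' hm.hasProd fun s => ?_
    calc (1 : ℝ) = ∏ _i ∈ s, 1 := by simp
    _ ≤ ∏ i ∈ s, (1 - -c * q ^ i) := by
        refine Finset.prod_le_prod (fun i _ => by norm_num) fun i _ => ?_
        nlinarith [pow_pos hq i, mul_nonneg hc (le_of_lt (pow_pos hq i))]
  · rw [tprod_eq_one_of_not_multipliable hm]

theorem stmt13 (q ν : ℝ) (hq0 : 0 < q) (hq1 : q < 1) :
    (∀ z : ℂ,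
      qp ((q : ℂ) ^ 2) (-(((q ^ (-2 * ν + 1) : ℝ) : ℂ) * z ^ 2)) ≠ 0 →
      qp ((q : ℂ) ^ 2) (-(((q ^ (-2 * ν + 1) : ℝ) : ℂ) * ((q : ℂ) * z) ^ 2)) ≠ 0 →
      z ^ 2 * (-((q ^ (-2 * ν + 1) : ℝ) : ℂ) * hh q ν z + (q : ℂ) ^ 2 * hh q ν ((q : ℂ) * z)) =
        hh q ν z - hh q ν ((q : ℂ) * z)) ∧
    (∀ x : ℝ, qpR (q ^ 2) (-(q ^ (-2 * ν + 1) * x ^ 2)) ≠ 0 ∧ 0 < hhR q ν x) := by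
  have hQnorm : ‖((q : ℂ)) ^ 2‖ < 1 := by
    rw [norm_pow, Complex.norm_real, Real.norm_eq_abs, abs_of_pos hq0]
    nlinarith
  set Q : ℂ := (q : ℂ) ^ 2 with hQ
  set a : ℂ := ((q ^ (-2 * ν + 1) : ℝ) : ℂ) with ha
  constructor
  · intro z hD hDq
    have hNshift : qp Q (-(Q * z ^ 2)) = (1 + Q * z ^ 2) * qp Q (-(Q * ((q : ℂ) * z) ^ 2)) := by
      have := qp_shift Q (-(Q * z ^ 2)) hQnorm
      rw [this]
      congr 1
      · ring
      · congr 1; ring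
    have hDshift : qp Q (-(a * z ^ 2)) = (1 + a * z ^ 2) * qp Q (-(a * ((q : ℂ) * z) ^ 2)) := by
      have := qp_shift Q (-(a * z ^ 2)) hQnorm
      rw [this]
      congr 1
      · ring
      · congr 1; ring
    have h1a : (1 + a * z ^ 2) ≠ 0 := by
      intro h
      apply hD
      rw [hDshift, h, zero_mul]
    unfold hh
    rw [hNshift, hDshift]
    set B := qp Q (-(Q * ((q : ℂ) * z) ^ 2)) with hB
    set C := qp Q (-(a * ((q : ℂ) * z) ^ 2)) with hC
    clear_value B C
    have hCne : C ≠ 0 := hDq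
    have h1a' : 1 + z ^ 2 * a ≠ 0 := by rwa [mul_comm]
    field_simp
    ring
  · intro x
    have hqp : (0 : ℝ) < q ^ (-2 * ν + 1) := Real.rpow_pos_of_pos hq0 _
    have hQpos : (0 : ℝ) < q ^ 2 := by positivity
    have hden : 1 ≤ qpR (q ^ 2) (-(q ^ (-2 * ν + 1) * x ^ 2)) :=
      one_le_qpR _ _ hQpos (by positivity)
    have hnum : 1 ≤ qpR (q ^ 2) (-(q ^ 2 * x ^ 2)) :=
      one_le_qpR _ _ hQpos (by positivity)
    refine ⟨by linarith, ?_⟩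
    unfold hhR
    exact div_pos (by linarith) (by linarith)
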